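/- (1) If a structure N locally trace defines a structure M, then local trace definability of M in N can be witnessed by a collection of at most |Th(M)| functions M → N. (2) If some model of a theory T is locally trace definable in a model of a theory T* via κ functions, then every model of T is locally trace definable in some model of T* via κ functions. (3) If a structure M₁ is locally trace definable in a structure M₂ via κ functions and M₂ is locally trace definable in a structure M₃ via η functions, then M₁ is locally trace definable in M₃ via κ·η functions. -/

import Mathlib

open FirstOrder Language Set Cardinal

namespace TracePaper

/-- First-order languages with symbols in `Type 0`. -/
abbrev Lang := FirstOrder.Language.{0,0}

/-- A set is definable with parameters (i.e. over the full domain). -/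
def Dfn (L : Lang) (M : Type) [L.Structure M] {α : Type} (s : Set (α → M)) : Prop :=
  Set.Definable (Set.univ : Set M) L s

/-- A set is definable without parameters. -/
def Dfn0 (L : Lang) (M : Type) [L.Structure M] {α : Type} (s : Set (α → M)) : Prop :=
  Set.Definable (∅ : Set M) L s

/-- `N` trace defines `M` via the injection `τ : M → N^n`. -/
def TraceVia (L₁ : Lang) (N : Type) [L₁.Structure N]
    (L₂ : Lang) (M : Type) [L₂.Structure M] {n : ℕ} (τ : M → Fin n → N) : Prop :=
  ∀ (m : ℕ) (X : Set (Fin m → M)), Dfn L₂ M X →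
    ∃ Y : Set (Fin m × Fin n → N), Dfn L₁ N Y ∧
      X = {a | (fun p : Fin m × Fin n => τ (a p.1) p.2) ∈ Y}

/-- The structure `N` trace defines the structure `M`. -/
def Traces (L₁ : Lang) (N : Type) [L₁.Structure N]
    (L₂ : Lang) (M : Type) [L₂.Structure M] : Prop :=
  ∃ (n : ℕ) (τ : M → Fin n → N), 0 < n ∧ Function.Injective τ ∧ TraceVia L₁ N L₂ M τ

/-- The collection `E` of functions witnesses local trace definability of `M` in `N`. -/
def LocalWitness (L₁ : Lang) (N : Type) [L₁.Structure N]
    (L₂ : Lang) (M : Type) [L₂.Structure M] (E : Set (M → N)) : Prop :=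
  ∀ (m : ℕ) (X : Set (Fin m → M)), Dfn L₂ M X →
    ∃ (d : ℕ) (τ : Fin d → M → N) (j : Fin d → Fin m) (Y : Set (Fin d → N)),
      (∀ t, τ t ∈ E) ∧ Dfn L₁ N Y ∧
      X = {a | (fun t => τ t (a (j t))) ∈ Y}

/-- The structure `N` locally trace defines the structure `M`. -/
def LocTraces (L₁ : Lang) (N : Type) [L₁.Structure N]
    (L₂ : Lang) (M : Type) [L₂.Structure M] : Prop :=
  ∃ E : Set (M → N), LocalWitness L₁ N L₂ M E

/-- `N` locally trace defines `M` via (at most) `κ` functions. -/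
def LocTracesVia (L₁ : Lang) (N : Type) [L₁.Structure N]
    (L₂ : Lang) (M : Type) [L₂.Structure M] (κ : Cardinal.{0}) : Prop :=
  ∃ E : Set (M → N), #E ≤ κ ∧ LocalWitness L₁ N L₂ M E

/-- The theory `T₁` trace defines the theory `T₂`: some model of `T₂` is trace
definable in some model of `T₁`. -/
def TTraces (L₁ : Lang) (T₁ : L₁.Theory) (L₂ : Lang) (T₂ : L₂.Theory) : Prop :=
  ∃ (N : Type) (S₁ : L₁.Structure N) (M : Type) (S₂ : L₂.Structure M),
    Infinite N ∧ Infinite M ∧ @Theory.Model L₁ N S₁ T₁ ∧ @Theory.Model L₂ M S₂ T₂ ∧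
      @Traces L₁ N S₁ L₂ M S₂

/-- Trace equivalence of theories. -/
def TTraceEquiv (L₁ : Lang) (T₁ : L₁.Theory) (L₂ : Lang) (T₂ : L₂.Theory) :
    Prop :=
  TTraces L₁ T₁ L₂ T₂ ∧ TTraces L₂ T₂ L₁ T₁

/-- The theory `T₁` locally trace defines the theory `T₂`. -/
def TLocTraces (L₁ : Lang) (T₁ : L₁.Theory) (L₂ : Lang) (T₂ : L₂.Theory) :
    Prop :=
  ∃ (N : Type) (S₁ : L₁.Structure N) (M : Type) (S₂ : L₂.Structure M),
    Infinite N ∧ Infinite M ∧ @Theory.Model L₁ N S₁ T₁ ∧ @Theory.Model L₂ M S₂ T₂ ∧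
      @LocTraces L₁ N S₁ L₂ M S₂

/-- The theory `T₁` locally trace defines the theory `T₂` via at most `κ` functions. -/
def TLocTracesVia (L₁ : Lang) (T₁ : L₁.Theory) (L₂ : Lang) (T₂ : L₂.Theory)
    (κ : Cardinal.{0}) : Prop :=
  ∃ (N : Type) (S₁ : L₁.Structure N) (M : Type) (S₂ : L₂.Structure M),
    Infinite N ∧ Infinite M ∧ @Theory.Model L₁ N S₁ T₁ ∧ @Theory.Model L₂ M S₂ T₂ ∧
      @LocTracesVia L₁ N S₁ L₂ M S₂ κ

/-- Local trace equivalence of theories. -/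
def TLocTraceEquiv (L₁ : Lang) (T₁ : L₁.Theory) (L₂ : Lang)
    (T₂ : L₂.Theory) : Prop :=
  TLocTraces L₁ T₁ L₂ T₂ ∧ TLocTraces L₂ T₂ L₁ T₁

/-- A theory is trace maximal if it trace defines every (infinite) structure. -/
def TraceMaximal (L₁ : Lang) (T₁ : L₁.Theory) : Prop :=
  ∀ (L₂ : Lang) (M : Type) (S₂ : L₂.Structure M), Infinite M →
    TTraces L₁ T₁ L₂ (@Language.completeTheory L₂ M S₂)

section DLang

/-- The relational language coding the function symbols of `L`: an `n`-ary function symbol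
becomes an `(n+1)`-ary relation symbol (its graph). -/
def funRelLang (L : Lang) : Lang where
  Functions := fun _ => Empty
  Relations := fun n => match n with
    | 0 => Empty
    | (m+1) => L.Functions m

/-- The language consisting of the relation symbols of `L`. -/
def relLang (L : Lang) : Lang where
  Functions := fun _ => Empty
  Relations := L.Relations

/-- The language with a unary sort predicate (for the first sort `P`) and a binary relation
symbol for (the graph of) each projection `π_i`, `i : ι`. -/
def projLang (ι : Type) : Lang where
  Functions := fun _ => Empty
  Relations := fun n => match n with
    | 1 => Unit
    | 2 => ι
    | _ => Empty

/-- The (relational) one-sorted language coding the two-sorted structures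
`(P, 𝔐, (π_i)_{i : ι})`. -/
def DLang (L : Lang) (ι : Type) : Lang :=
  (funRelLang L).sum ((relLang L).sum (projLang ι))

variable {L : Lang} {ι P M : Type}

/-- Interpretation of the graph-relations of the function symbols of `L` on `P ⊕ M`. -/
def funRelInterp (L : Lang) (P M : Type) [L.Structure M] :
    ∀ {n : ℕ}, (funRelLang L).Relations n → (Fin n → P ⊕ M) → Prop
  | 0, r, _ => Empty.elim r
  | (m+1), g, x =>
      ∃ a : Fin m → M, (∀ i : Fin m, x i.castSucc = Sum.inr (a i)) ∧
        x (Fin.last m) = Sum.inr (Structure.funMap g a)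

/-- Interpretation of the sort predicate and the projection graphs on `P ⊕ M`. -/
def projInterp (π : ι → P → M) :
    ∀ {n : ℕ}, (projLang ι).Relations n → (Fin n → P ⊕ M) → Prop
  | 0, r, _ => Empty.elim r
  | 1, _, x => ∃ p : P, x 0 = Sum.inl p
  | 2, i, x => ∃ p : P, x 0 = Sum.inl p ∧ x 1 = Sum.inr (π i p)
  | (_+3), r, _ => Empty.elim r

/-- The one-sorted structure on `P ⊕ M` coding the two-sorted structure `(P, 𝔐, (π_i))`. -/
def dStructure (L : Lang) (ι P M : Type) [L.Structure M] (π : ι → P → M) :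
    (DLang L ι).Structure (P ⊕ M) where
  funMap := fun {_} f _ => (Sum.elim Empty.elim (Sum.elim Empty.elim Empty.elim)) f
  RelMap := fun {n} r x =>
    Sum.elim (fun g => funRelInterp L P M g x)
      (Sum.elim
        (fun s => ∃ a : Fin n → M, (∀ i, x i = Sum.inr (a i)) ∧
          Structure.RelMap (L := L) (M := M) (show L.Relations n from s) a)
        (fun t => projInterp π t x)) r

/-- The canonical structure coding `(M^ι, 𝔐, (π_i)_{i : ι})`. -/
def canonD (L : Lang) (ι M : Type) [L.Structure M] :
    (DLang L ι).Structure ((ι → M) ⊕ M) :=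
  dStructure L ι (ι → M) M (fun i x => x i)

/-- The theory `D^κ(T)` where `κ = #ι` and `T = Th(M)`: the complete theory of the
(coded) two-sorted structure `(M^ι, 𝔐, (π_i)_{i : ι})`. -/
def DTheory (L : Lang) (ι M : Type) [L.Structure M] : (DLang L ι).Theory :=
  @Language.completeTheory (DLang L ι) ((ι → M) ⊕ M) (canonD L ι M)

/-- The genericity axioms for `(P, 𝔐, (π_i))`: any finite, pairwise-distinctly-indexed
tuple of values is realized by at least `m` elements of `P`, for every `m`. -/
def Generic {ι P M : Type} (π : ι → P → M) : Prop :=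
  ∀ (n : ℕ) (idx : Fin n → ι), Function.Injective idx →
    ∀ (a : Fin n → M) (m : ℕ), ∃ S : Finset P, m ≤ S.card ∧
      ∀ p ∈ S, ∀ k : Fin n, π (idx k) p = a k

end DLang

section Helpers

variable {L : Lang} {M : Type} [L.Structure M]

theorem dfn_of_formula {α : Type} (φ : L.Formula α) : Dfn L M {v | φ.Realize v} :=
  Set.Definable.mono (Set.empty_definable_iff.2 ⟨φ, rfl⟩) (Set.empty_subset _)

theorem dfn_param_form {α : Type} {X : Set (α → M)} (h : Dfn L M X) :
    ∃ (k : ℕ) (ψ : L.Formula (α ⊕ Fin k)) (b : Fin k → M),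
      X = {v | ψ.Realize (Sum.elim v b)} := by
  obtain ⟨A0, -, hd⟩ := Set.definable_iff_finitely_definable.1 h
  obtain ⟨φ, rfl⟩ := Set.definable_iff_exists_formula_sum.1 hd
  haveI : Finite ↥((A0 : Set M)) := A0.finite_toSet.to_subtype
  obtain ⟨k, ⟨e⟩⟩ := Finite.exists_equiv_fin ↥((A0 : Set M))
  refine ⟨k, φ.relabel (Sum.elim (fun c => Sum.inr (e c)) Sum.inl),
    fun s => ((e.symm s : ↥((A0 : Set M))) : M), ?_⟩
  ext v
  simp only [Set.mem_setOf_eq, Formula.realize_relabel]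
  refine iff_of_eq (congrArg _ (funext fun x => ?_))
  rcases x with cc | a
  · simp [Function.comp]
  · rfl

theorem dfn_of_param_form {α : Type} {k : ℕ} (ψ : L.Formula (α ⊕ Fin k)) (b : Fin k → M) :
    Dfn L M {v : α → M | ψ.Realize (Sum.elim v b)} := by
  refine Set.definable_iff_exists_formula_sum.2
    ⟨ψ.relabel (Sum.elim Sum.inr fun s => Sum.inl ⟨b s, Set.mem_univ _⟩), ?_⟩
  ext v
  simp only [Set.mem_setOf_eq, Formula.realize_relabel]
  refine iff_of_eq (congrArg _ (funext fun x => ?_))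
  rcases x with a | s
  · rfl
  · rfl

theorem dfn_subst [Nonempty M] {d d' : ℕ} {Y : Set (Fin d → M)} (hY : Dfn L M Y)
    (f : Fin d → Fin d' ⊕ M) :
    Dfn L M {y : Fin d' → M | (fun t => Sum.elim y id (f t)) ∈ Y} := by
  obtain ⟨k, ψ, b, rfl⟩ := dfn_param_form hY
  have h2 := dfn_of_param_form (M := M)
    (ψ.relabel (Sum.elim (fun t => Sum.map id (fun _ : M => Fin.castAdd k t) (f t))
      fun s => Sum.inr (Fin.natAdd d s)))
    (Fin.append (fun t => Sum.elim (fun _ => Classical.arbitrary M) id (f t)) b)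
  convert h2 using 1
  ext y
  simp only [Set.mem_setOf_eq, Formula.realize_relabel]
  refine iff_of_eq (congrArg _ (funext fun x => ?_))
  rcases x with t | s
  · rcases ht : f t with s' | cval
    · simp [ht]
    · simp [ht, Fin.append_left]
  · simp [Fin.append_right]

theorem localWitness_of_formula_witness {LA LB : Lang} {N M : Type}
    [LA.Structure N] [LB.Structure M] [Nonempty N] {E : Set (M → N)}
    (H0 : ∀ (m : ℕ) (φ : LB.Formula (Fin m)),
      ∃ (d : ℕ) (τ : Fin d → M → N) (j : Fin d → Fin m) (Y : Set (Fin d → N)),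
        (∀ t, τ t ∈ E) ∧ Dfn LA N Y ∧
          {v | φ.Realize v} = {a | (fun t => τ t (a (j t))) ∈ Y}) :
    LocalWitness LA N LB M E := by
  intro m X hX
  rcases Nat.eq_zero_or_pos m with hm | hm
  · subst hm
    have hss : ∀ x y : Fin 0 → M, x = y := fun x y => funext fun i => i.elim0
    by_cases h0 : (fun i => i.elim0 : Fin 0 → M) ∈ X
    · refine ⟨0, Fin.elim0, Fin.elim0, Set.univ, fun t => t.elim0, Set.definable_univ, ?_⟩
      ext a
      simp only [Set.mem_setOf_eq, Set.mem_univ, iff_true]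
      rw [hss a fun i => i.elim0]; exact h0
    · refine ⟨0, Fin.elim0, Fin.elim0, ∅, fun t => t.elim0, Set.definable_empty, ?_⟩
      ext a
      simp only [Set.mem_setOf_eq, Set.mem_empty_iff_false, iff_false]
      rw [hss a fun i => i.elim0]; exact h0
  · obtain ⟨k, ψ, b, hXeq⟩ := dfn_param_form hX
    obtain ⟨d, τ, j, Y, hτ, hY, hset⟩ := H0 (m + k) (ψ.relabel finSumFinEquiv)
    refine ⟨d, τ, fun t => Sum.elim id (fun _ => (⟨0, hm⟩ : Fin m)) (finSumFinEquiv.symm (j t)),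
      {y : Fin d → N | (fun t => Sum.elim y id
        (Sum.elim (fun _ : Fin m => Sum.inl t) (fun i => Sum.inr (τ t (b i)))
          (finSumFinEquiv.symm (j t)))) ∈ Y},
      hτ, dfn_subst hY _, ?_⟩
    ext a
    rw [hXeq]
    simp only [Set.mem_setOf_eq]
    have hc : ψ.Realize (Sum.elim a b) ↔
        (ψ.relabel (finSumFinEquiv : Fin m ⊕ Fin k ≃ Fin (m + k))).Realize
          (Sum.elim a b ∘ finSumFinEquiv.symm) := by
      rw [Formula.realize_relabel]
      refine iff_of_eq (congrArg _ (funext fun x => ?_))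
      simp [Function.comp]
    rw [hc]
    have hmem := Set.ext_iff.1 hset (Sum.elim a b ∘ finSumFinEquiv.symm)
    simp only [Set.mem_setOf_eq] at hmem
    rw [hmem]
    refine iff_of_eq (congrArg (· ∈ Y) (funext fun t => ?_))
    rcases hPt : finSumFinEquiv.symm (j t) with i | i <;>
      simp [Function.comp, hPt]

theorem realize_foldr_inf {L : Lang} {M : Type} [L.Structure M] {α : Type}
    (l : List (L.Formula α)) (v : α → M) :
    (l.foldr (· ⊓ ·) ⊤).Realize v ↔ ∀ φ ∈ l, φ.Realize v := by
  induction l with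
  | nil => simp [Formula.realize_top]
  | cons φ l ih => simp [Formula.realize_inf, ih]

theorem realize_iffSentence {L : Lang} {A : Type} {K : Type} [(L[[A]]).Structure K]
    [L.Structure K] [(L.lhomWithConstants A).IsExpansionOn K]
    {dp kp : ℕ} (ψ : L.Formula (Fin dp ⊕ Fin kp)) (ρ : (Fin dp ⊕ Fin kp) → A)
    (P : Prop) [Decidable P] :
    (K ⊨ (if P then Formula.equivSentence (ψ.relabel ρ)
        else (Formula.equivSentence (ψ.relabel ρ)).not)) ↔
      (P ↔ ψ.Realize ((fun x => ((L.con x) : K)) ∘ ρ)) := by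
  have h1 : (K ⊨ Formula.equivSentence (ψ.relabel ρ)) ↔
      ψ.Realize ((fun x => ((L.con x) : K)) ∘ ρ) := by
    rw [Formula.realize_equivSentence, Formula.realize_relabel]
  by_cases hr : P
  · rw [if_pos hr, h1]
    tauto
  · rw [if_neg hr, Sentence.realize_not, h1]
    tauto

theorem list_transfer {L : Lang} {M M' : Type} [L.Structure M] [L.Structure M']
    [Nonempty M] [Nonempty M']
    (htrans : ∀ σ : L.Sentence, M ⊨ σ → M' ⊨ σ)
    (Gl : List (Σ p : (Σ m : ℕ, L.Formula (Fin m)), (Fin p.1 → M))) :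
    ∃ h : M → M', ∀ g ∈ Gl, (g.1.2.Realize (h ∘ g.2) ↔ g.1.2.Realize g.2) := by
  classical
  set U : Set M := ⋃ g ∈ Gl, Set.range g.2 with hU
  have hUfin : U.Finite := (List.finite_toSet Gl).biUnion fun g _ => Set.finite_range g.2
  haveI : Fintype ↥U := hUfin.fintype
  haveI : Finite (Option ↥U) := Finite.of_fintype _
  set fml : (Σ p : (Σ m : ℕ, L.Formula (Fin m)), (Fin p.1 → M)) → L.Formula M := fun g =>
    if g.1.2.Realize g.2 then g.1.2.relabel g.2 else (g.1.2.relabel g.2).not with hfml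
  set χ : L.Formula M := (Gl.map fml).foldr (· ⊓ ·) ⊤ with hχdef
  have hχ : ∀ (K : Type) [L.Structure K] (v : M → K),
      (χ.Realize v ↔ ∀ g ∈ Gl, (g.1.2.Realize (v ∘ g.2) ↔ g.1.2.Realize g.2)) := by
    intro K SK v
    rw [hχdef, realize_foldr_inf]
    constructor
    · intro H g hg
      have hg2 := H (fml g) (List.mem_map_of_mem hg)
      by_cases hgr : g.1.2.Realize g.2 <;>
        simp only [hfml, hgr, Formula.realize_not,
          Formula.realize_relabel, iff_true, iff_false, ite_true, ite_false,
          if_true, if_false] at hg2 ⊢ <;>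
        tauto
    · intro H φ hφ
      obtain ⟨g, hg, rfl⟩ := List.mem_map.1 hφ
      have := H g hg
      by_cases hgr : g.1.2.Realize g.2 <;>
        simp only [hfml, hgr, Formula.realize_not, Formula.realize_relabel,
          iff_true, iff_false, ite_true, ite_false, if_true, if_false] at this ⊢ <;>
        tauto
  set f : M → Empty ⊕ Option ↥U := fun x =>
    Sum.inr (if h : x ∈ U then some (⟨x, h⟩ : ↥U) else none) with hf
  have hMσ0 : ((χ.relabel f).iExs (Option ↥U)).Realize (default : Empty → M) := by
    rw [Formula.realize_iExs]
    refine ⟨fun o => Option.elim o (Classical.arbitrary M) Subtype.val, ?_⟩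
    rw [Formula.realize_relabel]
    show χ.Realize (fun a => Sum.elim (default : Empty → M)
      (fun o : Option ↥U => Option.elim o (Classical.arbitrary M) Subtype.val) (f a))
    rw [hχ]
    intro g hg
    have hcomp : ((fun a => Sum.elim (default : Empty → M)
        (fun o : Option ↥U => Option.elim o (Classical.arbitrary M) Subtype.val) (f a)) ∘ g.2)
        = g.2 := by
      funext q
      have hq : g.2 q ∈ U := by
        rw [hU]
        exact Set.mem_iUnion₂.2 ⟨g, hg, Set.mem_range_self q⟩
      simp [hf, Function.comp, dif_pos hq]
    rw [hcomp]
  have hMσ : M ⊨ (χ.relabel f).iExs (Option ↥U) := hMσ0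
  have hM'σ : ((χ.relabel f).iExs (Option ↥U)).Realize (default : Empty → M') := htrans _ hMσ
  rw [Formula.realize_iExs] at hM'σ
  obtain ⟨i, hi⟩ := hM'σ
  rw [Formula.realize_relabel, hχ] at hi
  exact ⟨fun a => Sum.elim (default : Empty → M') i (f a), hi⟩

end Helpers

/-- (1) If `N` locally trace defines `M` then this can be witnessed by a collection of at most
`|Th(M)| = |L₂| + ℵ₀` functions `M → N`.
(2) If some model of `T` is locally trace definable in a model of `T*` via `κ` functions, then
every model of `T` is locally trace definable in some model of `T*` via `κ` functions.
(3) Local trace definability via `κ` and via `η` functions compose to local trace definability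
via `κ * η` functions. -/
theorem statement0 :
    -- (1)
    (∀ (L₁ L₂ : Lang) (N M : Type) (S₁ : L₁.Structure N) (S₂ : L₂.Structure M),
      Infinite N → Infinite M →
      @LocTraces L₁ N S₁ L₂ M S₂ →
      ∃ E : Set (M → N), #E ≤ L₂.card + ℵ₀ ∧ @LocalWitness L₁ N S₁ L₂ M S₂ E) ∧
    -- (2)
    (∀ (L₁ L₂ : Lang) (T : L₁.Theory) (T' : L₂.Theory) (κ : Cardinal.{0}),
      T.IsComplete → T'.IsComplete →
      (∃ (M : Type) (SM : L₁.Structure M) (N : Type) (SN : L₂.Structure N),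
        Infinite M ∧ Infinite N ∧ @Theory.Model L₁ M SM T ∧ @Theory.Model L₂ N SN T' ∧
          @LocTracesVia L₂ N SN L₁ M SM κ) →
      ∀ (M : Type) (SM : L₁.Structure M), Infinite M → @Theory.Model L₁ M SM T →
        ∃ (N : Type) (SN : L₂.Structure N), Infinite N ∧ @Theory.Model L₂ N SN T' ∧
          @LocTracesVia L₂ N SN L₁ M SM κ) ∧
    -- (3)
    (∀ (L₁ L₂ L₃ : Lang) (M₁ M₂ M₃ : Type)
        (S₁ : L₁.Structure M₁) (S₂ : L₂.Structure M₂) (S₃ : L₃.Structure M₃)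
        (κ η : Cardinal.{0}),
      Infinite M₁ → Infinite M₂ → Infinite M₃ →
      @LocTracesVia L₂ M₂ S₂ L₁ M₁ S₁ κ → @LocTracesVia L₃ M₃ S₃ L₂ M₂ S₂ η →
      @LocTracesVia L₃ M₃ S₃ L₁ M₁ S₁ (κ * η)) := by
  refine ⟨?_, ?_, ?_⟩
  -- PART 1
  · rintro L₁ L₂ N M S₁ S₂ hNinf hMinf ⟨E₀, hE₀⟩
    letI := S₁; letI := S₂
    haveI := hNinf; haveI := hMinf
    classical
    choose d τ j Y hτ hY hset using fun p : (Σ m : ℕ, L₂.Formula (Fin m)) =>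
      hE₀ p.1 {v | p.2.Realize v} (dfn_of_formula p.2)
    haveI : Nonempty (Σ m : ℕ, L₂.Formula (Fin m)) := ⟨⟨0, ⊥⟩⟩
    refine ⟨⋃ p, Set.range (τ p), ?_, ?_⟩
    · have hform : ∀ m : ℕ, #(L₂.Formula (Fin m)) ≤ L₂.card + ℵ₀ := by
        intro m
        have h1 : #(L₂.Formula (Fin m)) ≤ #(Σ n, L₂.BoundedFormula (Fin m) n) :=
          Cardinal.mk_le_of_injective (f := Sigma.mk 0) sigma_mk_injective
        refine h1.trans ((BoundedFormula.card_le).trans ?_)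
        simp only [Cardinal.lift_id, Cardinal.mk_fin]
        refine max_le (self_le_add_left _ _) ?_
        rw [add_comm (m : Cardinal)]
        exact add_le_add le_rfl (Cardinal.nat_lt_aleph0 m).le
      have hι : #(Σ m : ℕ, L₂.Formula (Fin m)) ≤ L₂.card + ℵ₀ := by
        rw [Cardinal.mk_sigma]
        refine (Cardinal.sum_le_sum _ _ hform).trans ?_
        rw [Cardinal.sum_const', Cardinal.mk_nat]
        refine le_trans (mul_le_mul' (self_le_add_left ℵ₀ (L₂.card)) le_rfl) ?_
        exact (Cardinal.mul_eq_self (self_le_add_left ℵ₀ (L₂.card))).le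
      calc #(⋃ p, Set.range (τ p))
          ≤ #(Σ m : ℕ, L₂.Formula (Fin m)) * ⨆ p, #(Set.range (τ p)) := Cardinal.mk_iUnion_le _
        _ ≤ (L₂.card + ℵ₀) * (L₂.card + ℵ₀) :=
            mul_le_mul' hι (ciSup_le' fun p => Cardinal.mk_range_le.trans
              (by rw [Cardinal.mk_fin]
                  exact (Cardinal.nat_lt_aleph0 _).le.trans (self_le_add_left _ _)))
        _ = L₂.card + ℵ₀ := Cardinal.mul_eq_self (self_le_add_left _ _)
    · exact localWitness_of_formula_witness fun m φ => ⟨d ⟨m, φ⟩, τ ⟨m, φ⟩, j ⟨m, φ⟩, Y ⟨m, φ⟩,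
        fun t => Set.mem_iUnion.2 ⟨⟨m, φ⟩, Set.mem_range_self t⟩, hY ⟨m, φ⟩, hset ⟨m, φ⟩⟩
  -- PART 2
  · rintro L₁ L₂ T T' κ hT hT'
      ⟨M₀, SM₀, N₀, SN₀, hM₀inf, hN₀inf, hM₀T, hN₀T', E₀, hE₀c, hE₀w⟩ M SM hMinf hMT
    letI := SM; letI := SM₀; letI := SN₀
    haveI := hMinf; haveI := hM₀inf; haveI := hN₀inf
    haveI := hMT; haveI := hM₀T; haveI := hN₀T'
    classical
    have step : ∀ p : (Σ m : ℕ, L₁.Formula (Fin m)),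
        ∃ (dp : ℕ) (ep : Fin dp → ↥E₀) (jp : Fin dp → Fin p.1) (kp : ℕ)
          (ψp : L₂.Formula (Fin dp ⊕ Fin kp)) (cp : Fin kp → N₀),
          ∀ a : Fin p.1 → M₀, p.2.Realize a ↔
            ψp.Realize (Sum.elim (fun t => (ep t).1 (a (jp t))) cp) := by
      intro p
      obtain ⟨dp, τp, jp, Yp, hτp, hYp, hsetp⟩ :=
        hE₀w p.1 {v | p.2.Realize v} (dfn_of_formula p.2)
      obtain ⟨kp, ψp, cp, hYeq⟩ := dfn_param_form hYp
      refine ⟨dp, fun t => ⟨τp t, hτp t⟩, jp, kp, ψp, cp, fun a => ?_⟩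
      have h1 := Set.ext_iff.1 hsetp a
      have h2 := Set.ext_iff.1 hYeq fun t => τp t (a (jp t))
      simp only [Set.mem_setOf_eq] at h1 h2
      exact h1.trans h2
    choose d e j k ψ c hspec using step
    set A : Type := (↥E₀ × M) ⊕ (Σ p : (Σ m : ℕ, L₁.Formula (Fin m)), Fin (k p)) with hA
    set ρ : ∀ p : (Σ m : ℕ, L₁.Formula (Fin m)),
        (Fin p.1 → M) → ((Fin (d p) ⊕ Fin (k p)) → A) :=
      fun p a => Sum.elim (fun t => Sum.inl (e p t, a (j p t))) (fun s => Sum.inr ⟨p, s⟩) with hρ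
    set S : ∀ p : (Σ m : ℕ, L₁.Formula (Fin m)), (Fin p.1 → M) → (L₂[[A]]).Sentence :=
      fun p a => if p.2.Realize a then Formula.equivSentence ((ψ p).relabel (ρ p a))
        else (Formula.equivSentence ((ψ p).relabel (ρ p a))).not with hS
    set Θ : (L₂[[A]]).Theory :=
      (L₂.lhomWithConstants A).onTheory T' ∪ (L₂[[A]]).infiniteTheory ∪
        {s | ∃ p a, S p a = s} with hΘ
    have hsat : Theory.IsSatisfiable Θ := by
      rw [Theory.isSatisfiable_iff_isFinitelySatisfiable]
      intro Θ₀ hΘ₀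
      set pick : (L₂[[A]]).Sentence → Option (Σ p : (Σ m : ℕ, L₁.Formula (Fin m)),
          (Fin p.1 → M)) := fun s =>
        if h : ∃ g : (Σ p : (Σ m : ℕ, L₁.Formula (Fin m)), (Fin p.1 → M)),
            S g.1 g.2 = s then some h.choose else none with hpickdef
      set Gl : List (Σ p : (Σ m : ℕ, L₁.Formula (Fin m)), (Fin p.1 → M)) :=
        Θ₀.toList.filterMap pick with hGl
      have htrans : ∀ σ : L₁.Sentence, M ⊨ σ → M₀ ⊨ σ := by
        intro σ hσ
        rw [hT.realize_sentence_iff σ M₀]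
        rw [hT.realize_sentence_iff σ M] at hσ
        exact hσ
      obtain ⟨h, hh⟩ := list_transfer htrans Gl
      letI : (Language.constantsOn A).Structure N₀ :=
        constantsOn.structure (Sum.elim (fun ex => ex.1.1 (h ex.2)) (fun b => c b.1 b.2))
      haveI : N₀ ⊨ (Θ₀ : (L₂[[A]]).Theory) := by
        rw [Theory.model_iff]
        intro s hs
        have hsΘ := hΘ₀ hs
        rw [hΘ] at hsΘ
        rcases hsΘ with (hs' | hs') | hs'
        · haveI : N₀ ⊨ (L₂.lhomWithConstants A).onTheory T' :=
            (LHom.onTheory_model _ _).2 hN₀T'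
          exact Theory.realize_sentence_of_mem ((L₂.lhomWithConstants A).onTheory T') hs'
        · exact Theory.realize_sentence_of_mem ((L₂[[A]]).infiniteTheory) hs'
        · have hex : ∃ g : (Σ p : (Σ m : ℕ, L₁.Formula (Fin m)), (Fin p.1 → M)),
              S g.1 g.2 = s := by
            obtain ⟨p, a, hpa⟩ := hs'
            exact ⟨⟨p, a⟩, hpa⟩
          have hpick : pick s = some hex.choose := by
            rw [hpickdef]; exact dif_pos hex
          have hmemGl : hex.choose ∈ Gl := by
            rw [hGl]
            exact List.mem_filterMap.2 ⟨s, Finset.mem_toList.2 hs, hpick⟩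
          rw [← hex.choose_spec]
          simp only [hS]
          refine (realize_iffSentence _ _ _).2 ?_
          have hρc : ((fun x : A => ((L₂.con x) : N₀)) ∘ ρ hex.choose.1 hex.choose.2) =
              Sum.elim (fun t => (e hex.choose.1 t).1 (h (hex.choose.2 (j hex.choose.1 t))))
                (c hex.choose.1) := by
            funext x
            rcases x with t | s'
            · simp only [hρ, Function.comp_apply, Sum.elim_inl]; rfl
            · simp only [hρ, Function.comp_apply, Sum.elim_inr]; rfl
          rw [hρc]
          exact (hh hex.choose hmemGl).symm.trans (hspec hex.choose.1 (h ∘ hex.choose.2))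
      exact ⟨Theory.ModelType.of _ N₀⟩
    obtain ⟨NN⟩ := hsat
    letI SNc : (L₂[[A]]).Structure NN.Carrier := NN.struc
    letI SN : L₂.Structure NN.Carrier := (L₂.lhomWithConstants A).reduct NN.Carrier
    haveI hexp : @LHom.IsExpansionOn L₂ (L₂[[A]]) (L₂.lhomWithConstants A) NN.Carrier SN SNc :=
      LHom.isExpansionOn_reduct _ _
    haveI hNNinf : Infinite NN.Carrier := by
      refine (Language.model_infiniteTheory_iff (L₂[[A]])).1 ?_
      refine NN.is_model.mono ?_
      rw [hΘ]
      exact fun s hs => Set.mem_union_left _ (Set.mem_union_right _ hs)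
    have hNT' : NN.Carrier ⊨ T' := by
      refine (LHom.onTheory_model (L₂.lhomWithConstants A) T').1 ?_
      refine NN.is_model.mono ?_
      rw [hΘ]
      exact fun s hs => Set.mem_union_left _ (Set.mem_union_left _ hs)
    have hax : ∀ (p : (Σ m : ℕ, L₁.Formula (Fin m))) (a : Fin p.1 → M),
        NN.Carrier ⊨ S p a := by
      intro p a
      haveI := NN.is_model
      refine Theory.realize_sentence_of_mem Θ ?_
      rw [hΘ]
      exact Set.mem_union_right _ ⟨p, a, rfl⟩
    have hkey : ∀ (p : (Σ m : ℕ, L₁.Formula (Fin m))) (a : Fin p.1 → M),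
        p.2.Realize a ↔ (ψ p).Realize ((fun x : A => ((L₂.con x) : NN.Carrier)) ∘ ρ p a) := by
      intro p a
      have h1 := hax p a
      simp only [hS] at h1
      exact (realize_iffSentence _ _ _).1 h1
    refine ⟨NN.Carrier, SN, hNNinf, hNT',
      Set.range (fun i : ↥E₀ => fun x : M => ((L₂.con ((Sum.inl (i, x)) : A)) : NN.Carrier)),
      Cardinal.mk_range_le.trans hE₀c, localWitness_of_formula_witness ?_⟩
    intro m φ
    refine ⟨d ⟨m, φ⟩, fun t x => ((L₂.con ((Sum.inl (e ⟨m, φ⟩ t, x)) : A)) : NN.Carrier),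
      j ⟨m, φ⟩,
      {y : Fin (d ⟨m, φ⟩) → NN.Carrier | (ψ ⟨m, φ⟩).Realize
        (Sum.elim y (fun s => ((L₂.con ((Sum.inr ⟨⟨m, φ⟩, s⟩) : A)) : NN.Carrier)))},
      fun t => Set.mem_range_self _, dfn_of_param_form _ _, ?_⟩
    ext a
    simp only [Set.mem_setOf_eq]
    rw [hkey ⟨m, φ⟩ a]
    refine iff_of_eq (congrArg _ (funext fun x => ?_))
    rcases x with t | s <;> simp [hρ]
  -- PART 3
  · rintro L₁ L₂ L₃ M₁ M₂ M₃ S₁ S₂ S₃ κ η h1inf h2inf h3inf ⟨E, hEc, hEw⟩ ⟨F, hFc, hFw⟩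
    letI := S₁; letI := S₂; letI := S₃
    refine ⟨(fun p : (M₂ → M₃) × (M₁ → M₂) => p.1 ∘ p.2) '' (F ×ˢ E), ?_, ?_⟩
    · calc #((fun p : (M₂ → M₃) × (M₁ → M₂) => p.1 ∘ p.2) '' (F ×ˢ E))
          ≤ #(F ×ˢ E : Set _) := Cardinal.mk_image_le
        _ = #F * #E := by
            rw [Cardinal.mk_congr (Equiv.Set.prod F E), Cardinal.mk_prod,
              Cardinal.lift_id, Cardinal.lift_id]
        _ ≤ η * κ := mul_le_mul' hFc hEc
        _ = κ * η := mul_comm _ _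
    · intro m X hX
      obtain ⟨d, τ, j, Y, hτ, hY, hXY⟩ := hEw m X hX
      obtain ⟨d2, σf, j2, Z, hσ, hZ, hYZ⟩ := hFw d Y hY
      refine ⟨d2, fun s => σf s ∘ τ (j2 s), fun s => j (j2 s), Z,
        fun s => ⟨(σf s, τ (j2 s)), ⟨hσ s, hτ (j2 s)⟩, rfl⟩, hZ, ?_⟩
      rw [hXY]
      ext a
      simp only [Set.mem_setOf_eq]
      exact Set.ext_iff.1 hYZ fun t => τ t (a (j t))

end TracePaper
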